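/- Define h(n) = 2^{v₂(n)} · 3^{v₃(n)} and G(n) = 5n + 1 if n = h(n), else G(n) = h(n). Then for every positive integer n, some iterate of G applied to n equals 1. -/

import Mathlib

/-- `h(n) = 2^{v₂(n)} · 3^{v₃(n)}`. -/
def holdout23 (n : ℕ) : ℕ := 2 ^ padicValNat 2 n * 3 ^ padicValNat 3 n

/-- The holdout map of `H_{5,{2,3}}`. -/
def G523 (n : ℕ) : ℕ :=
  if n = holdout23 n then 5 * n + 1 else holdout23 n

section aux

instance fact2 : Fact (Nat.Prime 2) := ⟨Nat.prime_two⟩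
instance fact3 : Fact (Nat.Prime 3) := ⟨Nat.prime_three⟩

lemma pvn_eq (p : ℕ) [Fact p.Prime] {n k : ℕ} (hn : n ≠ 0) (h1 : p ^ k ∣ n)
    (h2 : ¬ p ^ (k + 1) ∣ n) : padicValNat p n = k := by
  have a := (padicValNat_dvd_iff_le hn).1 h1
  have b : ¬ (k + 1 ≤ padicValNat p n) := fun hh => h2 ((padicValNat_dvd_iff_le hn).2 hh)
  omega

lemma holdout_eval {n a b : ℕ} (hn : n ≠ 0) (h1 : 2 ^ a ∣ n) (h2 : ¬ 2 ^ (a + 1) ∣ n)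
    (h3 : 3 ^ b ∣ n) (h4 : ¬ 3 ^ (b + 1) ∣ n) : holdout23 n = 2 ^ a * 3 ^ b := by
  unfold holdout23
  rw [pvn_eq 2 hn h1 h2, pvn_eq 3 hn h3 h4]

lemma G_smooth {n : ℕ} (h : n = holdout23 n) : G523 n = 5 * n + 1 := if_pos h

lemma G_not {n : ℕ} (h : n ≠ holdout23 n) : G523 n = holdout23 n := if_neg h

lemma reach_step {x y : ℕ} (h : G523 x = y) (hy : ∃ k, G523^[k] y = 1) :
    ∃ k, G523^[k] x = 1 := by
  obtain ⟨k, hk⟩ := hy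
  exact ⟨k + 1, by rw [Function.iterate_succ_apply, h, hk]⟩

lemma holdout_dvd (m : ℕ) : holdout23 m ∣ m := by
  unfold holdout23
  exact Nat.Coprime.mul_dvd_of_dvd_of_dvd
    (Nat.Coprime.pow _ _ (by decide))
    pow_padicValNat_dvd pow_padicValNat_dvd

lemma holdout_pos (m : ℕ) : 0 < holdout23 m := by
  unfold holdout23; positivity

lemma pv2_pow (a b : ℕ) : padicValNat 2 (2 ^ a * 3 ^ b) = a := by
  rw [padicValNat.mul (pow_ne_zero _ two_ne_zero) (pow_ne_zero _ three_ne_zero),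
    padicValNat.prime_pow, padicValNat.eq_zero_of_not_dvd, add_zero]
  intro h
  have := Nat.Prime.dvd_of_dvd_pow Nat.prime_two h
  norm_num at this

lemma pv3_pow (a b : ℕ) : padicValNat 3 (2 ^ a * 3 ^ b) = b := by
  rw [padicValNat.mul (pow_ne_zero _ two_ne_zero) (pow_ne_zero _ three_ne_zero),
    padicValNat.prime_pow, padicValNat.eq_zero_of_not_dvd, zero_add]
  intro h
  have := Nat.Prime.dvd_of_dvd_pow Nat.prime_three h
  norm_num at this

/-- the cofactor of the holdout is coprime to 6, hence `≥ 5` when nontrivial -/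
lemma holdout_lt (n : ℕ) (hn : 2 ≤ n) (hne : 5 * n + 1 ≠ holdout23 (5 * n + 1)) :
    holdout23 (5 * n + 1) < n := by
  set m := 5 * n + 1 with hm
  obtain ⟨r, hr⟩ := holdout_dvd m
  have hhpos : 0 < holdout23 m := holdout_pos m
  have hmpos : 0 < m := by omega
  have hrpos : 0 < r := by
    apply Nat.pos_of_ne_zero
    intro h0
    rw [h0, mul_zero] at hr
    omega
  have e2 : padicValNat 2 (holdout23 m) = padicValNat 2 m := pv2_pow _ _
  have e3 : padicValNat 3 (holdout23 m) = padicValNat 3 m := pv3_pow _ _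
  have hmul2 : padicValNat 2 m = padicValNat 2 (holdout23 m) + padicValNat 2 r := by
    conv_lhs => rw [hr]
    exact padicValNat.mul (by omega) (by omega)
  have hmul3 : padicValNat 3 m = padicValNat 3 (holdout23 m) + padicValNat 3 r := by
    conv_lhs => rw [hr]
    exact padicValNat.mul (by omega) (by omega)
  have h2r : ¬ 2 ∣ r := fun hdvd => by
    have := one_le_padicValNat_of_dvd hrpos.ne' hdvd; omega
  have h3r : ¬ 3 ∣ r := fun hdvd => by
    have := one_le_padicValNat_of_dvd hrpos.ne' hdvd; omega
  have hr1 : r ≠ 1 := by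
    intro h1
    rw [h1, mul_one] at hr
    exact hne hr
  have m2 : r % 2 ≠ 0 := fun hh => h2r (Nat.dvd_of_mod_eq_zero hh)
  have m3 : r % 3 ≠ 0 := fun hh => h3r (Nat.dvd_of_mod_eq_zero hh)
  have hr5 : 5 ≤ r := by omega
  have hle : holdout23 m * 5 ≤ m := by
    calc holdout23 m * 5 ≤ holdout23 m * r := Nat.mul_le_mul_left _ hr5
    _ = m := hr.symm
  -- so holdout ≤ n; if equal, m = n * r with r ≥ 5 gives contradiction
  have hlen : holdout23 m ≤ n := by omega
  rcases lt_or_eq_of_le hlen with h | h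
  · exact h
  · exfalso
    rw [h] at hr
    rcases Nat.lt_or_ge r 6 with h6 | h6
    · have hr5' : r = 5 := by omega
      rw [hr5'] at hr
      omega
    · have h66 : n * 6 ≤ n * r := Nat.mul_le_mul_left n h6
      omega

lemma ord4 {c : ℕ} (h : 2 ^ c % 5 = 1) : c % 4 = 0 := by
  have hc : 2 ^ c % 5 = 2 ^ (c % 4) % 5 := by
    conv_lhs => rw [← Nat.div_add_mod c 4]
    rw [pow_add, pow_mul, Nat.mul_mod, Nat.pow_mod]
    norm_num
  have h4 : c % 4 < 4 := Nat.mod_lt _ (by norm_num)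
  interval_cases h' : c % 4 <;> simp_all

lemma ord6 {c : ℕ} (h : 2 ^ c % 9 = 1) : c % 6 = 0 := by
  have hc : 2 ^ c % 9 = 2 ^ (c % 6) % 9 := by
    conv_lhs => rw [← Nat.div_add_mod c 6]
    rw [pow_add, pow_mul, Nat.mul_mod, Nat.pow_mod]
    norm_num
  have h6 : c % 6 < 6 := Nat.mod_lt _ (by norm_num)
  interval_cases h' : c % 6 <;> simp_all

lemma ord8 {d : ℕ} (h : 3 ^ d % 32 = 1) : d % 8 = 0 := by
  have hc : 3 ^ d % 32 = 3 ^ (d % 8) % 32 := by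
    conv_lhs => rw [← Nat.div_add_mod d 8]
    rw [pow_add, pow_mul, Nat.mul_mod, Nat.pow_mod]
    norm_num
  have h8 : d % 8 < 8 := Nat.mod_lt _ (by norm_num)
  interval_cases h' : d % 8 <;> simp_all

/-- The key Diophantine fact: if both `m = 2^a 3^b` and `5m+1` are 3-smooth,
then `m ∈ {1, 3, 16}`. -/
lemma key {a b c d : ℕ} (h : 5 * (2 ^ a * 3 ^ b) + 1 = 2 ^ c * 3 ^ d) :
    2 ^ a * 3 ^ b = 1 ∨ 2 ^ a * 3 ^ b = 3 ∨ 2 ^ a * 3 ^ b = 16 := by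
  rcases Nat.eq_zero_or_pos a with ha | ha
  · rcases Nat.eq_zero_or_pos b with hb | hb
    · subst ha; subst hb; left; norm_num
    · -- a = 0, b ≥ 1 : 5·3^b + 1 = 2^c
      subst ha
      rw [pow_zero, one_mul] at h ⊢
      -- d = 0 since LHS ≡ 1 mod 3
      obtain ⟨t, ht⟩ : (3:ℕ) ∣ 3 ^ b := dvd_pow_self 3 (by omega)
      have hd : d = 0 := by
        by_contra hd0
        obtain ⟨s, hs⟩ : (3:ℕ) ∣ 2 ^ c * 3 ^ d :=
          Dvd.dvd.mul_left (dvd_pow_self 3 hd0) _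
        omega
      subst hd
      rw [pow_zero, mul_one] at h
      rcases Nat.lt_or_ge b 2 with hb2 | hb2
      · -- b = 1
        have hb1 : b = 1 := by omega
        subst hb1
        right; left; norm_num
      · -- b ≥ 2 : contradiction
        exfalso
        have m5 : 2 ^ c % 5 = 1 := by omega
        obtain ⟨u, hu⟩ : (9:ℕ) ∣ 3 ^ b := by
          calc (9:ℕ) = 3 ^ 2 := by norm_num
          _ ∣ 3 ^ b := pow_dvd_pow 3 hb2
        have m9 : 2 ^ c % 9 = 1 := by omega
        have h4 := ord4 m5
        have h6 := ord6 m9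
        obtain ⟨e, he⟩ : 12 ∣ c := by omega
        have hdvd : (4095:ℕ) ∣ 2 ^ c - 1 := by
          have := Nat.sub_dvd_pow_sub_pow (2 ^ 12) 1 e
          rw [← pow_mul, one_pow, ← he] at this
          norm_num at this
          exact this
        have h7 : (7:ℕ) ∣ 5 * 3 ^ b := by
          have h1 : 1 ≤ 2 ^ c := Nat.one_le_two_pow
          have : 2 ^ c - 1 = 5 * 3 ^ b := by omega
          rw [this] at hdvd
          exact dvd_trans (by norm_num) hdvd
        rcases (Nat.Prime.dvd_mul (by norm_num)).1 h7 with h75 | h73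
        · norm_num at h75
        · have := Nat.Prime.dvd_of_dvd_pow (p := 7) (by norm_num) h73
          norm_num at this
  · rcases Nat.eq_zero_or_pos b with hb | hb
    · -- b = 0, a ≥ 1 : 5·2^a + 1 = 3^d
      subst hb
      rw [pow_zero, mul_one] at h ⊢
      obtain ⟨t, ht⟩ : (2:ℕ) ∣ 2 ^ a := dvd_pow_self 2 (by omega)
      have hc : c = 0 := by
        by_contra hc0
        obtain ⟨s, hs⟩ : (2:ℕ) ∣ 2 ^ c * 3 ^ d :=
          Dvd.dvd.mul_right (dvd_pow_self 2 hc0) _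
        omega
      subst hc
      rw [pow_zero, one_mul] at h
      rcases Nat.lt_or_ge a 5 with ha5 | ha5
      · -- a ≤ 4 : check each case
        interval_cases a
        · -- 11 = 3^d
          exfalso
          rcases Nat.lt_or_ge d 2 with hd2 | hd2
          · interval_cases d <;> omega
          · obtain ⟨u, hu⟩ : (9:ℕ) ∣ 3 ^ d := by
              calc (9:ℕ) = 3 ^ 2 := by norm_num
              _ ∣ 3 ^ d := pow_dvd_pow 3 hd2
            omega
        · exfalso
          rcases Nat.lt_or_ge d 2 with hd2 | hd2
          · interval_cases d <;> omega
          · obtain ⟨u, hu⟩ : (9:ℕ) ∣ 3 ^ d := by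
              calc (9:ℕ) = 3 ^ 2 := by norm_num
              _ ∣ 3 ^ d := pow_dvd_pow 3 hd2
            omega
        · exfalso
          rcases Nat.lt_or_ge d 2 with hd2 | hd2
          · interval_cases d <;> omega
          · obtain ⟨u, hu⟩ : (9:ℕ) ∣ 3 ^ d := by
              calc (9:ℕ) = 3 ^ 2 := by norm_num
              _ ∣ 3 ^ d := pow_dvd_pow 3 hd2
            omega
        · right; right; norm_num
      · -- a ≥ 5 : contradiction
        exfalso
        obtain ⟨t32, ht32⟩ : (32:ℕ) ∣ 2 ^ a := by
          calc (32:ℕ) = 2 ^ 5 := by norm_num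
          _ ∣ 2 ^ a := pow_dvd_pow 2 ha5
        have m32 : 3 ^ d % 32 = 1 := by omega
        have h8 := ord8 m32
        obtain ⟨f, hf⟩ : 8 ∣ d := by omega
        have hdvd : (6560:ℕ) ∣ 3 ^ d - 1 := by
          have := Nat.sub_dvd_pow_sub_pow (3 ^ 8) 1 f
          rw [← pow_mul, one_pow, ← hf] at this
          norm_num at this
          exact this
        have h41 : (41:ℕ) ∣ 5 * 2 ^ a := by
          have h1 : 1 ≤ (3:ℕ) ^ d := Nat.one_le_pow _ _ (by norm_num)
          have : 3 ^ d - 1 = 5 * 2 ^ a := by omega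
          rw [this] at hdvd
          exact dvd_trans (by norm_num) hdvd
        rcases (Nat.Prime.dvd_mul (by norm_num)).1 h41 with h415 | h412
        · norm_num at h415
        · have := Nat.Prime.dvd_of_dvd_pow (p := 41) (by norm_num) h412
          norm_num at this
    · -- a ≥ 1, b ≥ 1 : 5m + 1 odd and ≡ 1 mod 3, so RHS = 1, impossible
      exfalso
      obtain ⟨t, ht⟩ : (2:ℕ) ∣ 2 ^ a := dvd_pow_self 2 (by omega)
      obtain ⟨u, hu⟩ : (3:ℕ) ∣ 3 ^ b := dvd_pow_self 3 (by omega)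
      have hc : c = 0 := by
        by_contra hc0
        obtain ⟨s, hs⟩ : (2:ℕ) ∣ 2 ^ c * 3 ^ d :=
          Dvd.dvd.mul_right (dvd_pow_self 2 hc0) _
        have : (2:ℕ) ∣ 2 ^ a * 3 ^ b := Dvd.dvd.mul_right (dvd_pow_self 2 (by omega)) _
        omega
      have hd : d = 0 := by
        by_contra hd0
        obtain ⟨s, hs⟩ : (3:ℕ) ∣ 2 ^ c * 3 ^ d :=
          Dvd.dvd.mul_left (dvd_pow_self 3 hd0) _
        have : (3:ℕ) ∣ 2 ^ a * 3 ^ b := Dvd.dvd.mul_left (dvd_pow_self 3 (by omega)) _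
        omega
      subst hc; subst hd
      have h2a : 1 ≤ 2 ^ a := Nat.one_le_two_pow
      have h3b : 1 ≤ 3 ^ b := Nat.one_le_pow _ _ (by norm_num)
      simp only [pow_zero, one_mul] at h
      nlinarith

-- explicit orbit computations
lemma reach1 : ∃ k : ℕ, G523^[k] 1 = 1 := ⟨0, rfl⟩

lemma g11 : G523 11 = 1 := by
  have h := holdout_eval (n := 11) (a := 0) (b := 0) (by norm_num)
    (by norm_num) (by norm_num) (by norm_num) (by norm_num)
  norm_num at h
  rw [G_not (by rw [h]; norm_num), h]

lemma g2 : G523 2 = 11 := by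
  have h := holdout_eval (n := 2) (a := 1) (b := 0) (by norm_num)
    (by norm_num) (by norm_num) (by norm_num) (by norm_num)
  rw [G_smooth (by rw [h]; norm_num)]

lemma g406 : G523 406 = 2 := by
  have h := holdout_eval (n := 406) (a := 1) (b := 0) (by norm_num)
    (by norm_num) (by norm_num) (by norm_num) (by norm_num)
  norm_num at h
  rw [G_not (by rw [h]; norm_num), h]

lemma g81 : G523 81 = 406 := by
  have h := holdout_eval (n := 81) (a := 0) (b := 4) (by norm_num)
    (by norm_num) (by norm_num) (by norm_num) (by norm_num)
  rw [G_smooth (by rw [h]; norm_num)]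

lemma g16 : G523 16 = 81 := by
  have h := holdout_eval (n := 16) (a := 4) (b := 0) (by norm_num)
    (by norm_num) (by norm_num) (by norm_num) (by norm_num)
  rw [G_smooth (by rw [h]; norm_num)]

lemma g3 : G523 3 = 16 := by
  have h := holdout_eval (n := 3) (a := 0) (b := 1) (by norm_num)
    (by norm_num) (by norm_num) (by norm_num) (by norm_num)
  rw [G_smooth (by rw [h]; norm_num)]

lemma reach2 : ∃ k : ℕ, G523^[k] 2 = 1 := reach_step g2 (reach_step g11 reach1)

lemma reach16 : ∃ k : ℕ, G523^[k] 16 = 1 :=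
  reach_step g16 (reach_step g81 (reach_step g406 reach2))

lemma reach3 : ∃ k : ℕ, G523^[k] 3 = 1 := reach_step g3 reach16

end aux

theorem stmt_17 (n : ℕ) (hn : 0 < n) : ∃ k : ℕ, G523^[k] n = 1 := by
  induction n using Nat.strong_induction_on with
  | _ n ih =>
  rcases Nat.lt_or_ge n 2 with h1 | h2
  · -- n = 1
    have : n = 1 := by omega
    subst this; exact reach1
  by_cases hs : n = holdout23 n
  · by_cases hs2 : (5 * n + 1) = holdout23 (5 * n + 1)
    · -- both smooth: use the key lemma
      have heq : 5 * (2 ^ padicValNat 2 n * 3 ^ padicValNat 3 n) + 1 =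
          2 ^ padicValNat 2 (5 * n + 1) * 3 ^ padicValNat 3 (5 * n + 1) := by
        calc 5 * (2 ^ padicValNat 2 n * 3 ^ padicValNat 3 n) + 1
            = 5 * holdout23 n + 1 := rfl
          _ = 5 * n + 1 := by rw [← hs]
          _ = holdout23 (5 * n + 1) := hs2
          _ = _ := rfl
      have := key heq
      have hn' : n = 2 ^ padicValNat 2 n * 3 ^ padicValNat 3 n := hs
      rw [← hn'] at this
      rcases this with h | h | h
      · omega
      · rw [h]; exact reach3
      · rw [h]; exact reach16
    · -- n smooth, 5n+1 not smooth
      apply reach_step (G_smooth hs)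
      apply reach_step (G_not hs2)
      exact ih _ (holdout_lt n h2 hs2) (holdout_pos _)
  · -- n not smooth
    apply reach_step (G_not hs)
    have hdvd := holdout_dvd n
    have hlt : holdout23 n < n :=
      lt_of_le_of_ne (Nat.le_of_dvd (by omega) hdvd) (fun hh => hs hh.symm)
    exact ih _ hlt (holdout_pos _)
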